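/- Let δ ∈ {0,1}. For any integer N (positive or negative), the sum over n ≥ 0 of q^{n^2 + n(N-δ)} / ((q;q)_n (q;q)_{n+N}) equals (1 + δ q^N) / (q;q)_∞, with the convention 1/(q;q)_k = 0 for integers k < 0. -/

import Mathlib

open scoped BigOperators

/-- Finite q-Pochhammer symbol $(a;q)_n$. -/
noncomputable def qPoch (q a : ℂ) (n : ℕ) : ℂ := ∏ j ∈ Finset.range n, (1 - a * q ^ j)

/-- Infinite q-Pochhammer symbol $(a;q)_\infty$. -/
noncomputable def qPochInf (q a : ℂ) : ℂ := ∏' j : ℕ, (1 - a * q ^ j)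

/-- Reciprocal $1/(q;q)_k$ for an integer index, vanishing for $k<0$. -/
noncomputable def qPochRecipZ (q : ℂ) (k : ℤ) : ℂ :=
  if k < 0 then 0 else (qPoch q q k.toNat)⁻¹

namespace QGaussAux

open Filter Topology

/-- The general term of the series. -/
noncomputable def T (q : ℂ) (δ N : ℤ) (n : ℕ) : ℂ :=
  q ^ ((n : ℤ) ^ 2 + (n : ℤ) * (N - δ)) * (qPoch q q n)⁻¹ * qPochRecipZ q ((n : ℤ) + N)

/-- The sum of the series. -/
noncomputable def S (q : ℂ) (δ N : ℤ) : ℂ := ∑' n : ℕ, T q δ N n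

variable {q : ℂ}

lemma factor_ne (hq : ‖q‖ < 1) (j : ℕ) : (1 : ℂ) - q * q ^ j ≠ 0 := by
  intro h
  have h1 : q * q ^ j = 1 := by linear_combination -h
  have h2 : ‖q * q ^ j‖ < 1 := by
    rw [norm_mul, norm_pow]
    calc ‖q‖ * ‖q‖ ^ j ≤ ‖q‖ * 1 := by
          gcongr
          exact pow_le_one₀ (norm_nonneg _) hq.le
      _ = ‖q‖ := mul_one _
      _ < 1 := hq
  rw [h1, norm_one] at h2
  exact lt_irrefl _ h2

lemma qPoch_ne_zero (hq : ‖q‖ < 1) (n : ℕ) : qPoch q q n ≠ 0 :=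
  Finset.prod_ne_zero_iff.mpr fun j _ => factor_ne hq j

lemma qPoch_succ (n : ℕ) : qPoch q q (n + 1) = qPoch q q n * (1 - q * q ^ n) :=
  Finset.prod_range_succ _ n

lemma qPoch_succ_inv (hq : ‖q‖ < 1) (n : ℕ) :
    (qPoch q q (n + 1))⁻¹ * (1 - q * q ^ n) = (qPoch q q n)⁻¹ := by
  rw [qPoch_succ, mul_inv, mul_assoc, inv_mul_cancel₀ (factor_ne hq n), mul_one]

lemma summable_log (hq : ‖q‖ < 1) :
    Summable fun j : ℕ => Complex.log (1 - q * q ^ j) := by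
  have hC : Summable fun j : ℕ => (((1 - ‖q‖)⁻¹ / 2 + 1) * ‖q‖) * ‖q‖ ^ j :=
    (summable_geometric_of_lt_one (norm_nonneg q) hq).mul_left _
  refine Summable.of_norm_bounded hC fun j => ?_
  have hzn : ‖-(q * q ^ j)‖ = ‖q‖ * ‖q‖ ^ j := by rw [norm_neg, norm_mul, norm_pow]
  have hle : ‖q‖ * ‖q‖ ^ j ≤ ‖q‖ := by
    calc ‖q‖ * ‖q‖ ^ j ≤ ‖q‖ * 1 := by
          gcongr
          exact pow_le_one₀ (norm_nonneg _) hq.le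
      _ = ‖q‖ := mul_one _
  have hz1 : ‖-(q * q ^ j)‖ < 1 := by rw [hzn]; exact lt_of_le_of_lt hle hq
  have hb := Complex.norm_log_one_add_le hz1
  rw [show (1 : ℂ) + -(q * q ^ j) = 1 - q * q ^ j by ring] at hb
  refine hb.trans ?_
  rw [hzn]
  set z := ‖q‖ * ‖q‖ ^ j with hzdef
  have hz0 : 0 ≤ z := by positivity
  have hzq : z ≤ ‖q‖ := hle
  have h1 : (1 - z)⁻¹ ≤ (1 - ‖q‖)⁻¹ := by
    apply inv_anti₀ <;> linarith
  have h2 : z ^ 2 ≤ z := by nlinarith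
  have h3 : z ^ 2 * (1 - z)⁻¹ ≤ z * (1 - ‖q‖)⁻¹ :=
    mul_le_mul h2 h1 (inv_nonneg.mpr (by linarith)) hz0
  have hzr : ((1 - ‖q‖)⁻¹ / 2 + 1) * ‖q‖ * ‖q‖ ^ j = ((1 - ‖q‖)⁻¹ / 2 + 1) * z := by
    rw [hzdef]; ring
  rw [hzr]
  linarith [h3]

lemma hasProd_qPochInf (hq : ‖q‖ < 1) :
    HasProd (fun j : ℕ => 1 - q * q ^ j) (qPochInf q q) := by
  exact (Complex.multipliable_of_summable_log (summable_log hq)).hasProd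

lemma qPochInf_ne_zero (hq : ‖q‖ < 1) : qPochInf q q ≠ 0 := by
  have h2 := Complex.cexp_tsum_eq_tprod (f := fun j : ℕ => 1 - q * q ^ j)
    (fun j => factor_ne hq j) (summable_log hq)
  beta_reduce at h2
  rw [qPochInf, ← h2]
  exact Complex.exp_ne_zero _

lemma tendsto_qPoch (hq : ‖q‖ < 1) :
    Tendsto (fun n => qPoch q q n) atTop (𝓝 (qPochInf q q)) := by
  have h := (hasProd_qPochInf hq).tendsto_prod_nat
  simpa [qPoch] using h

lemma exists_lb (hq : ‖q‖ < 1) : ∃ c : ℝ, 0 < c ∧ ∀ n, c ≤ ‖qPoch q q n‖ := by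
  have hL : 0 < ‖qPochInf q q‖ := norm_pos_iff.mpr (qPochInf_ne_zero hq)
  have ht : Tendsto (fun n => ‖qPoch q q n‖) atTop (𝓝 ‖qPochInf q q‖) :=
    (tendsto_qPoch hq).norm
  have hev : ∀ᶠ n in atTop, ‖qPochInf q q‖ / 2 < ‖qPoch q q n‖ :=
    ht.eventually_const_lt (by linarith)
  obtain ⟨M, hM⟩ := eventually_atTop.mp hev
  have hne : (Finset.range (M + 1)).Nonempty := ⟨0, by simp⟩
  refine ⟨min (‖qPochInf q q‖ / 2)
      ((Finset.range (M + 1)).inf' hne fun n => ‖qPoch q q n‖), ?_, ?_⟩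
  · apply lt_min (by linarith)
    rw [Finset.lt_inf'_iff]
    intro i _
    exact norm_pos_iff.mpr (qPoch_ne_zero hq i)
  · intro n
    rcases le_or_gt n M with h | h
    · exact le_trans (min_le_right _ _)
        (Finset.inf'_le _ (by simp [Finset.mem_range]; omega))
    · exact le_trans (min_le_left _ _) (hM n h.le).le

section WithBound

variable (hq : ‖q‖ < 1) (hq0 : q ≠ 0) {c : ℝ} (hc : 0 < c)
  (hcP : ∀ n, c ≤ ‖qPoch q q n‖)

include hq hc hcP

lemma norm_recipZ_le (k : ℤ) : ‖qPochRecipZ q k‖ ≤ c⁻¹ := by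
  unfold qPochRecipZ
  split
  · simp only [norm_zero]
    positivity
  · rw [norm_inv]
    exact inv_anti₀ hc (hcP _)

lemma norm_T_le (δ N : ℤ) (n : ℕ) :
    ‖T q δ N n‖ ≤ ‖q‖ ^ ((n : ℤ) ^ 2 + (n : ℤ) * (N - δ)) * c⁻¹ * c⁻¹ := by
  unfold T
  rw [norm_mul, norm_mul, norm_zpow]
  have h1 : ‖(qPoch q q n)⁻¹‖ ≤ c⁻¹ := by
    rw [norm_inv]
    exact inv_anti₀ hc (hcP _)
  have h2 := norm_recipZ_le hq hc hcP ((n : ℤ) + N)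
  have hz : (0:ℝ) ≤ ‖q‖ ^ ((n : ℤ) ^ 2 + (n : ℤ) * (N - δ)) := zpow_nonneg (norm_nonneg q) _
  exact mul_le_mul (mul_le_mul le_rfl h1 (norm_nonneg _) hz) h2 (norm_nonneg _)
    (by positivity)

include hq0 in
lemma summable_norm_T (δ N : ℤ) : Summable fun n => ‖T q δ N n‖ := by
  have hq' : 0 < ‖q‖ := norm_pos_iff.mpr hq0
  refine Summable.of_norm_bounded_eventually_nat
    (g := fun n => (c⁻¹ * c⁻¹) * ‖q‖ ^ n)
    ((summable_geometric_of_lt_one (norm_nonneg q) hq).mul_left _) ?_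
  filter_upwards [eventually_ge_atTop (1 + δ - N).toNat] with n hn
  have hz : (1 + δ - N : ℤ) ≤ (n : ℤ) := Int.toNat_le.mp hn
  have he : (n : ℤ) ≤ (n : ℤ) ^ 2 + (n : ℤ) * (N - δ) := by nlinarith [Int.natCast_nonneg n]
  have hzp : ‖q‖ ^ ((n : ℤ) ^ 2 + (n : ℤ) * (N - δ)) ≤ ‖q‖ ^ (n : ℤ) :=
    zpow_le_zpow_right_of_le_one₀ hq' hq.le he
  rw [norm_norm]
  refine (norm_T_le hq hc hcP δ N n).trans ?_
  rw [show (c⁻¹ * c⁻¹) * ‖q‖ ^ n = (‖q‖ ^ (n:ℤ)) * c⁻¹ * c⁻¹ by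
    rw [zpow_natCast]; ring]
  gcongr

include hq0 in
lemma summable_T (δ N : ℤ) : Summable (T q δ N) :=
  (summable_norm_T hq hq0 hc hcP δ N).of_norm

include hq0 in
lemma norm_S_le (N : ℤ) (hN : 0 ≤ N) :
    ‖S q 0 N‖ ≤ c⁻¹ * c⁻¹ * (1 - ‖q‖)⁻¹ := by
  have hq' : 0 < ‖q‖ := norm_pos_iff.mpr hq0
  have hbd : ∀ n : ℕ, ‖T q 0 N n‖ ≤ (c⁻¹ * c⁻¹) * ‖q‖ ^ n := by
    intro n
    have he : (n : ℤ) ≤ (n : ℤ) ^ 2 + (n : ℤ) * (N - 0) := by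
      nlinarith [Int.natCast_nonneg n, sq_nonneg ((n : ℤ) - 1)]
    have hzp : ‖q‖ ^ ((n : ℤ) ^ 2 + (n : ℤ) * (N - 0)) ≤ ‖q‖ ^ (n : ℤ) :=
      zpow_le_zpow_right_of_le_one₀ hq' hq.le he
    refine (norm_T_le hq hc hcP 0 N n).trans ?_
    rw [show (c⁻¹ * c⁻¹) * ‖q‖ ^ n = (‖q‖ ^ (n:ℤ)) * c⁻¹ * c⁻¹ by
      rw [zpow_natCast]; ring]
    gcongr
  calc ‖S q 0 N‖ ≤ ∑' n, ‖T q 0 N n‖ :=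
        norm_tsum_le_tsum_norm (summable_norm_T hq hq0 hc hcP 0 N)
    _ ≤ ∑' n : ℕ, (c⁻¹ * c⁻¹) * ‖q‖ ^ n :=
        Summable.tsum_le_tsum hbd (summable_norm_T hq hq0 hc hcP 0 N)
          ((summable_geometric_of_lt_one (norm_nonneg q) hq).mul_left _)
    _ = c⁻¹ * c⁻¹ * (1 - ‖q‖)⁻¹ := by
        rw [tsum_mul_left, tsum_geometric_of_lt_one (norm_nonneg q) hq]

end WithBound

lemma recipZ_rec (hq : ‖q‖ < 1) (k : ℤ) :
    qPochRecipZ q (k + 1) * (1 - q ^ (k + 1)) = qPochRecipZ q k := by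
  unfold qPochRecipZ
  rcases lt_trichotomy k (-1) with h | h | h
  · rw [if_pos (by omega), if_pos (by omega), zero_mul]
  · subst h
    norm_num
  · have hk : 0 ≤ k := by omega
    rw [if_neg (by omega), if_neg (by omega)]
    have h1 : (k + 1).toNat = k.toNat + 1 := by omega
    have h2 : q ^ (k + 1) = q * q ^ k.toNat := by
      rw [show k + 1 = ((k.toNat + 1 : ℕ) : ℤ) by omega, zpow_natCast, pow_succ']
    rw [h1, h2, qPoch_succ_inv hq]

lemma T_rec (hq : ‖q‖ < 1) (hq0 : q ≠ 0) (N : ℤ) (n : ℕ) :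
    T q 0 N n = T q 1 (N + 1) n - q ^ (N + 1) * T q 0 (N + 1) n := by
  unfold T
  have hR := recipZ_rec hq ((n : ℤ) + N)
  rw [show (n : ℤ) ^ 2 + (n : ℤ) * (N - 0) = (n : ℤ) ^ 2 + (n : ℤ) * N by ring,
    show (n : ℤ) ^ 2 + (n : ℤ) * (N + 1 - 1) = (n : ℤ) ^ 2 + (n : ℤ) * N by ring,
    show (n : ℤ) ^ 2 + (n : ℤ) * (N + 1 - 0) = ((n : ℤ) ^ 2 + (n : ℤ) * N) + (n : ℤ) by ring,
    show (n : ℤ) + (N + 1) = ((n : ℤ) + N) + 1 by ring,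
    ← hR,
    zpow_add₀ hq0 ((n : ℤ) ^ 2 + (n : ℤ) * N) (n : ℤ),
    show ((n : ℤ) + N) + 1 = (n : ℤ) + (N + 1) by ring,
    zpow_add₀ hq0 (n : ℤ) (N + 1)]
  ring

lemma T_shift (hq : ‖q‖ < 1) (hq0 : q ≠ 0) (N : ℤ) (n : ℕ) :
    T q 1 N (n + 1) - T q 0 N (n + 1) = q ^ N * T q 0 (N + 1) n := by
  unfold T
  push_cast
  have hp : q ^ ((n : ℤ) + 1) = q * q ^ n := by
    rw [show (n : ℤ) + 1 = ((n + 1 : ℕ) : ℤ) by push_cast; ring, zpow_natCast, pow_succ']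
  rw [show ((n : ℤ) + 1) ^ 2 + ((n : ℤ) + 1) * (N - 0)
        = (N + ((n : ℤ) ^ 2 + (n : ℤ) * (N + 1 - 0))) + ((n : ℤ) + 1) by ring,
    show ((n : ℤ) + 1) ^ 2 + ((n : ℤ) + 1) * (N - 1)
        = N + ((n : ℤ) ^ 2 + (n : ℤ) * (N + 1 - 0)) by ring,
    show (n : ℤ) + 1 + N = (n : ℤ) + (N + 1) by ring,
    zpow_add₀ hq0 (N + ((n : ℤ) ^ 2 + (n : ℤ) * (N + 1 - 0))) ((n : ℤ) + 1),
    zpow_add₀ hq0 N ((n : ℤ) ^ 2 + (n : ℤ) * (N + 1 - 0)), hp]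
  calc q ^ N * q ^ ((n:ℤ) ^ 2 + (n:ℤ) * (N + 1 - 0)) * (qPoch q q (n + 1))⁻¹ *
          qPochRecipZ q ((n:ℤ) + (N + 1)) -
        q ^ N * q ^ ((n:ℤ) ^ 2 + (n:ℤ) * (N + 1 - 0)) * (q * q ^ n) *
          (qPoch q q (n + 1))⁻¹ * qPochRecipZ q ((n:ℤ) + (N + 1))
      = q ^ N * q ^ ((n:ℤ) ^ 2 + (n:ℤ) * (N + 1 - 0)) *
          ((qPoch q q (n + 1))⁻¹ * (1 - q * q ^ n)) * qPochRecipZ q ((n:ℤ) + (N + 1)) := by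
        ring
    _ = q ^ N * (q ^ ((n:ℤ) ^ 2 + (n:ℤ) * (N + 1 - 0)) * (qPoch q q n)⁻¹ *
          qPochRecipZ q ((n:ℤ) + (N + 1))) := by rw [qPoch_succ_inv hq]; ring

section Main

variable (hq : ‖q‖ < 1) (hq0 : q ≠ 0) {c : ℝ} (hc : 0 < c)
  (hcP : ∀ n, c ≤ ‖qPoch q q n‖)

include hq hq0 hc hcP

lemma S_rec (N : ℤ) : S q 0 N = S q 1 (N + 1) - q ^ (N + 1) * S q 0 (N + 1) := by
  unfold S
  rw [← tsum_mul_left,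
    ← Summable.tsum_sub (summable_T hq hq0 hc hcP 1 (N + 1))
      ((summable_T hq hq0 hc hcP 0 (N + 1)).mul_left _)]
  exact tsum_congr fun n => T_rec hq hq0 N n

lemma S_shift (N : ℤ) : S q 1 N = S q 0 N + q ^ N * S q 0 (N + 1) := by
  have hU : Summable fun n => T q 1 N n - T q 0 N n :=
    (summable_T hq hq0 hc hcP 1 N).sub (summable_T hq hq0 hc hcP 0 N)
  have h0 : T q 1 N 0 - T q 0 N 0 = 0 := by
    simp [T]
  have key : S q 1 N - S q 0 N = q ^ N * S q 0 (N + 1) := by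
    calc S q 1 N - S q 0 N = ∑' n, (T q 1 N n - T q 0 N n) :=
          (Summable.tsum_sub (summable_T hq hq0 hc hcP 1 N) (summable_T hq hq0 hc hcP 0 N)).symm
      _ = (T q 1 N 0 - T q 0 N 0) + ∑' n, (T q 1 N (n + 1) - T q 0 N (n + 1)) :=
          Summable.tsum_eq_zero_add hU
      _ = ∑' n, q ^ N * T q 0 (N + 1) n := by
          rw [h0, zero_add]
          exact tsum_congr fun n => T_shift hq hq0 N n
      _ = q ^ N * S q 0 (N + 1) := tsum_mul_left
  linear_combination key

lemma d_rec (N : ℤ) :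
    S q 0 N - S q 0 (N + 1) = -(q ^ (N + 1)) * (S q 0 (N + 1) - S q 0 (N + 2)) := by
  have h1 := S_rec hq hq0 hc hcP N
  have h2 := S_shift hq hq0 hc hcP (N + 1)
  rw [show N + 1 + 1 = N + 2 by ring] at h2
  linear_combination h1 + h2

lemma d_small (k : ℕ) :
    ∀ N : ℤ, 0 ≤ N →
      ‖S q 0 N - S q 0 (N + 1)‖ ≤ ‖q‖ ^ k * (2 * (c⁻¹ * c⁻¹ * (1 - ‖q‖)⁻¹)) := by
  induction k with
  | zero =>
    intro N hN
    rw [pow_zero, one_mul]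
    calc ‖S q 0 N - S q 0 (N + 1)‖ ≤ ‖S q 0 N‖ + ‖S q 0 (N + 1)‖ := norm_sub_le _ _
      _ ≤ c⁻¹ * c⁻¹ * (1 - ‖q‖)⁻¹ + c⁻¹ * c⁻¹ * (1 - ‖q‖)⁻¹ :=
          add_le_add (norm_S_le hq hq0 hc hcP N hN) (norm_S_le hq hq0 hc hcP (N + 1) (by omega))
      _ = 2 * (c⁻¹ * c⁻¹ * (1 - ‖q‖)⁻¹) := by ring
  | succ k ih =>
    intro N hN
    have hq' : 0 < ‖q‖ := norm_pos_iff.mpr hq0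
    rw [d_rec hq hq0 hc hcP N, norm_mul, norm_neg, norm_zpow]
    have h1 : ‖q‖ ^ (N + 1) ≤ ‖q‖ := by
      have := zpow_le_zpow_right_of_le_one₀ hq' hq.le (show (1 : ℤ) ≤ N + 1 by omega)
      simpa using this
    have h2 := ih (N + 1) (by omega)
    calc ‖q‖ ^ (N + 1) * ‖S q 0 (N + 1) - S q 0 (N + 2)‖
        ≤ ‖q‖ * (‖q‖ ^ k * (2 * (c⁻¹ * c⁻¹ * (1 - ‖q‖)⁻¹))) := by
          exact mul_le_mul h1 (by rw [show N + 1 + 1 = N + 2 by ring] at h2; exact h2)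
            (norm_nonneg _) (norm_nonneg q)
      _ = ‖q‖ ^ (k + 1) * (2 * (c⁻¹ * c⁻¹ * (1 - ‖q‖)⁻¹)) := by ring

lemma d_zero : ∀ N : ℤ, S q 0 N = S q 0 (N + 1) := by
  have key : ∀ N : ℤ, 0 ≤ N → S q 0 N = S q 0 (N + 1) := by
    intro N hN
    have h0 : Tendsto (fun k : ℕ => ‖q‖ ^ k * (2 * (c⁻¹ * c⁻¹ * (1 - ‖q‖)⁻¹)))
        atTop (𝓝 0) := by
      have := (tendsto_pow_atTop_nhds_zero_of_lt_one (norm_nonneg q) hq).mul_const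
        (2 * (c⁻¹ * c⁻¹ * (1 - ‖q‖)⁻¹))
      simpa using this
    have hle : ‖S q 0 N - S q 0 (N + 1)‖ ≤ 0 :=
      ge_of_tendsto h0 (Filter.Eventually.of_forall fun k => d_small hq hq0 hc hcP k N hN)
    have := le_antisymm hle (norm_nonneg _)
    rw [norm_eq_zero, sub_eq_zero] at this
    exact this
  have keyneg : ∀ m : ℕ, S q 0 (-(m : ℤ)) = S q 0 (-(m : ℤ) + 1) := by
    intro m
    induction m with
    | zero => simpa using key 0 le_rfl
    | succ m ih =>
      have h := d_rec hq hq0 hc hcP (-(m + 1 : ℕ) : ℤ)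
      have e1 : (-(m + 1 : ℕ) : ℤ) + 1 = -(m : ℤ) := by push_cast; ring
      have e2 : (-(m + 1 : ℕ) : ℤ) + 2 = -(m : ℤ) + 1 := by push_cast; ring
      rw [e1, e2] at h
      rw [ih, sub_self, mul_zero, sub_eq_zero] at h
      rw [e1, h]
      exact ih.symm
  intro N
  rcases le_or_gt 0 N with h | h
  · exact key N h
  · have hm : N = -(((-N).toNat : ℕ) : ℤ) := by omega
    rw [hm]
    exact keyneg _

lemma S_const : ∀ N : ℤ, S q 0 N = S q 0 0 := by
  intro N
  induction N using Int.induction_on with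
  | zero => rfl
  | succ i ih => rw [← d_zero hq hq0 hc hcP i, ih]
  | pred i ih =>
    have := d_zero hq hq0 hc hcP (-(i : ℤ) - 1)
    rw [show -(i : ℤ) - 1 + 1 = -(i : ℤ) by ring] at this
    rw [this, ih]

lemma S_val : S q 0 0 = (qPochInf q q)⁻¹ := by
  have hq' : 0 < ‖q‖ := norm_pos_iff.mpr hq0
  set B := c⁻¹ * c⁻¹ * (1 - ‖q‖)⁻¹ with hB
  have htail : ∀ m : ℕ, ‖S q 0 (m : ℤ) - (qPoch q q m)⁻¹‖ ≤ ‖q‖ ^ (m + 1) * B := by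
    intro m
    have hsum := summable_T hq hq0 hc hcP 0 (m : ℤ)
    have hzero : T q 0 (m : ℤ) 0 = (qPoch q q m)⁻¹ := by
      simp [T, qPochRecipZ, qPoch]
    have hsplit : S q 0 (m : ℤ) = (qPoch q q m)⁻¹ + ∑' n, T q 0 (m : ℤ) (n + 1) := by
      rw [S, Summable.tsum_eq_zero_add hsum, hzero]
    rw [hsplit, add_sub_cancel_left]
    have hnorm1 : Summable fun n : ℕ => ‖T q 0 (m : ℤ) (n + 1)‖ :=
      (summable_nat_add_iff 1).mpr (summable_norm_T hq hq0 hc hcP 0 (m : ℤ))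
    have hbd : ∀ n : ℕ, ‖T q 0 (m : ℤ) (n + 1)‖ ≤ (‖q‖ ^ (m + 1) * (c⁻¹ * c⁻¹)) * ‖q‖ ^ n := by
      intro n
      have he : ((m : ℤ) + 1) + (n : ℤ) ≤
          ((n + 1 : ℕ) : ℤ) ^ 2 + ((n + 1 : ℕ) : ℤ) * ((m : ℤ) - 0) := by
        push_cast
        nlinarith [Int.natCast_nonneg n, Int.natCast_nonneg m]
      have hzp : ‖q‖ ^ (((n + 1 : ℕ) : ℤ) ^ 2 + ((n + 1 : ℕ) : ℤ) * ((m : ℤ) - 0))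
          ≤ ‖q‖ ^ (((m : ℤ) + 1) + (n : ℤ)) :=
        zpow_le_zpow_right_of_le_one₀ hq' hq.le he
      refine (norm_T_le hq hc hcP 0 (m : ℤ) (n + 1)).trans ?_
      rw [show (‖q‖ ^ (m + 1) * (c⁻¹ * c⁻¹)) * ‖q‖ ^ n
          = (‖q‖ ^ (((m : ℤ) + 1) + (n : ℤ))) * c⁻¹ * c⁻¹ by
        rw [zpow_add₀ (ne_of_gt hq'), show ((m : ℤ) + 1) = ((m + 1 : ℕ) : ℤ) by push_cast; ring,
          zpow_natCast, zpow_natCast]; ring]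
      gcongr
    calc ‖∑' n, T q 0 (m : ℤ) (n + 1)‖ ≤ ∑' n, ‖T q 0 (m : ℤ) (n + 1)‖ :=
          norm_tsum_le_tsum_norm hnorm1
      _ ≤ ∑' n : ℕ, (‖q‖ ^ (m + 1) * (c⁻¹ * c⁻¹)) * ‖q‖ ^ n :=
          Summable.tsum_le_tsum hbd hnorm1
            ((summable_geometric_of_lt_one (norm_nonneg q) hq).mul_left _)
      _ = ‖q‖ ^ (m + 1) * B := by
          rw [tsum_mul_left, tsum_geometric_of_lt_one (norm_nonneg q) hq, hB]; ring
  have h1 : Tendsto (fun m : ℕ => (qPoch q q m)⁻¹) atTop (𝓝 (qPochInf q q)⁻¹) :=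
    (tendsto_qPoch hq).inv₀ (qPochInf_ne_zero hq)
  have h2 : Tendsto (fun m : ℕ => S q 0 (m : ℤ) - (qPoch q q m)⁻¹) atTop (𝓝 0) := by
    apply squeeze_zero_norm htail
    have := (tendsto_pow_atTop_nhds_zero_of_lt_one (norm_nonneg q) hq).mul_const (‖q‖ * B)
    rw [zero_mul] at this
    refine this.congr fun m => ?_
    rw [pow_succ]; ring
  have h3 : Tendsto (fun m : ℕ => S q 0 (m : ℤ)) atTop (𝓝 ((qPochInf q q)⁻¹)) := by
    have := h2.add h1
    rw [zero_add] at this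
    refine this.congr fun m => ?_
    ring
  have h4 : Tendsto (fun m : ℕ => S q 0 (m : ℤ)) atTop (𝓝 (S q 0 0)) := by
    have : (fun m : ℕ => S q 0 (m : ℤ)) = fun _ : ℕ => S q 0 0 := by
      funext m
      exact S_const hq hq0 hc hcP _
    rw [this]
    exact tendsto_const_nhds
  exact tendsto_nhds_unique h4 h3

end Main

end QGaussAux

/-- Specialised q-Gauss summation: for $\delta\in\{0,1\}$ and any integer $N$,
$\sum_{n\ge0} q^{n^2+n(N-\delta)}/((q;q)_n (q;q)_{n+N}) = (1+\delta q^N)/(q;q)_\infty$. -/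
theorem qGauss_special (q : ℂ) (hq : ‖q‖ < 1) (hq0 : q ≠ 0)
    (δ : ℤ) (hδ : δ = 0 ∨ δ = 1) (N : ℤ) :
    ∑' n : ℕ, q ^ ((n : ℤ) ^ 2 + (n : ℤ) * (N - δ)) * (qPoch q q n)⁻¹ *
        qPochRecipZ q ((n : ℤ) + N)
      = (1 + (δ : ℂ) * q ^ N) * (qPochInf q q)⁻¹ := by
  obtain ⟨c, hc, hcP⟩ := QGaussAux.exists_lb hq
  have hSval : ∀ M : ℤ, QGaussAux.S q 0 M = (qPochInf q q)⁻¹ := fun M => by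
    rw [QGaussAux.S_const hq hq0 hc hcP M, QGaussAux.S_val hq hq0 hc hcP]
  rcases hδ with rfl | rfl
  · have : (∑' n : ℕ, q ^ ((n : ℤ) ^ 2 + (n : ℤ) * (N - 0)) * (qPoch q q n)⁻¹ *
        qPochRecipZ q ((n : ℤ) + N)) = QGaussAux.S q 0 N := rfl
    rw [this, hSval N]
    push_cast
    ring
  · have h1 : (∑' n : ℕ, q ^ ((n : ℤ) ^ 2 + (n : ℤ) * (N - 1)) * (qPoch q q n)⁻¹ *
        qPochRecipZ q ((n : ℤ) + N)) = QGaussAux.S q 1 N := rfl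
    have h2 := QGaussAux.S_rec hq hq0 hc hcP (N - 1)
    rw [show N - 1 + 1 = N by ring] at h2
    rw [h1]
    rw [hSval (N - 1), hSval N] at h2
    have h3 : QGaussAux.S q 1 N = (qPochInf q q)⁻¹ + q ^ N * (qPochInf q q)⁻¹ := by
      linear_combination -h2
    rw [h3]
    push_cast
    ring
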